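/- Let ξ > 0 and κ > 0 be real constants and ϑ ∈ ℝ a constant. Suppose ε : ℝ → ℝ is differentiable on [0,∞), continuous, and satisfies the noise-perturbed error dynamics ε'(t) = -ξ·ε(t) - κ·∫₀ᵗ ε(s) ds + ϑ for all t ≥ 0. Then ε(t) tends to 0 as t → ∞. -/

import Mathlib

open MeasureTheory intervalIntegral Filter

theorem aztnd_constant_noise_rejection
    (ξ κ ϑ : ℝ) (hξ : 0 < ξ) (hκ : 0 < κ)
    (ε : ℝ → ℝ) (hεc : Continuous ε)
    (hdyn : ∀ t : ℝ, 0 ≤ t →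
      HasDerivAt ε (-ξ * ε t - κ * (∫ s in (0:ℝ)..t, ε s) + ϑ) t) :
    Tendsto ε atTop (nhds 0) := by
  -- characteristic roots
  set Δ : ℝ := ξ^2 - 4*κ with hΔ
  set s : ℂ := if 0 ≤ Δ then (Real.sqrt Δ : ℂ) else (Real.sqrt (-Δ) : ℂ) * Complex.I with hs
  have hs2 : s^2 = (Δ : ℂ) := by
    by_cases h : 0 ≤ Δ
    · simp only [hs, if_pos h]
      rw [← Complex.ofReal_pow, Real.sq_sqrt h]
    · simp only [hs, if_neg h]
      rw [mul_pow, Complex.I_sq, ← Complex.ofReal_pow, Real.sq_sqrt (by linarith [not_le.mp h])]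
      push_cast; ring
  have hsre : 0 ≤ s.re ∧ s.re < ξ := by
    by_cases h : 0 ≤ Δ
    · simp only [hs, if_pos h, Complex.ofReal_re]
      refine ⟨Real.sqrt_nonneg _, ?_⟩
      have : Δ < ξ^2 := by simp [hΔ]; nlinarith
      calc Real.sqrt Δ < Real.sqrt (ξ^2) := Real.sqrt_lt_sqrt h this
        _ = ξ := by rw [Real.sqrt_sq hξ.le]
    · simp only [hs, if_neg h, Complex.mul_re, Complex.I_re, Complex.I_im, Complex.ofReal_re,
        Complex.ofReal_im]
      constructor <;> nlinarith [hξ]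
  set rp : ℂ := (-(ξ:ℂ) + s)/2 with hrp
  set rm : ℂ := (-(ξ:ℂ) - s)/2 with hrm
  have hsum : rp + rm = -(ξ:ℂ) := by rw [hrp, hrm]; ring
  have hprod : rp * rm = (κ:ℂ) := by
    have : rp * rm = ((ξ:ℂ)^2 - s^2)/4 := by rw [hrp, hrm]; ring
    rw [this, hs2]; push_cast [hΔ]; ring
  have hrpre : rp.re = (-ξ + s.re)/2 := by
    rw [hrp]; simp [Complex.div_re, Complex.add_re, Complex.neg_re, Complex.ofReal_re,
      Complex.normSq]
  have ha : rp.re < 0 := by rw [hrpre]; linarith [hsre.2]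
  have hrmre : rm.re = (-ξ - s.re)/2 := by
    rw [hrm]; simp [Complex.div_re, Complex.sub_re, Complex.neg_re, Complex.ofReal_re,
      Complex.normSq]
  have hba : rm.re ≤ rp.re := by rw [hrpre, hrmre]; linarith [hsre.1]
  clear_value Δ s rp rm
  -- FTC for the primitive of ε
  have hI : ∀ t : ℝ, HasDerivAt (fun u => ∫ x in (0:ℝ)..u, ε x) (ε t) t := fun t =>
    intervalIntegral.integral_hasDerivAt_right (hεc.intervalIntegrable _ _)
      (hεc.stronglyMeasurableAtFilter _ _) hεc.continuousAt
  set D : ℝ → ℝ := fun t => -ξ * ε t - κ * (∫ x in (0:ℝ)..t, ε x) + ϑ with hDdef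
  have hDc : Continuous D := by
    apply Continuous.add _ continuous_const
    exact (continuous_const.mul hεc).sub (continuous_const.mul
      (intervalIntegral.continuous_primitive (fun a b => hεc.intervalIntegrable a b) 0))
  have hD : ∀ t : ℝ, 0 ≤ t → HasDerivAt D (-ξ * D t - κ * ε t) t := fun t ht =>
    (((hdyn t ht).const_mul (-ξ)).sub ((hI t).const_mul κ)).add_const ϑ
  -- complexify
  set εC : ℝ → ℂ := fun t => (ε t : ℂ) with hεCdef
  set DC : ℝ → ℂ := fun t => (D t : ℂ) with hDCdef
  have hεCc : Continuous εC := Complex.continuous_ofReal.comp hεc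
  have hDCc : Continuous DC := Complex.continuous_ofReal.comp hDc
  have hεCd : ∀ t : ℝ, 0 ≤ t → HasDerivAt εC (DC t) t := fun t ht => (hdyn t ht).ofReal_comp
  have hDCd : ∀ t : ℝ, 0 ≤ t → HasDerivAt DC (-(ξ:ℂ) * DC t - (κ:ℂ) * εC t) t := by
    intro t ht
    have h2 := (hD t ht).ofReal_comp
    convert h2 using 1
    push_cast [hDCdef, hεCdef]
    ring
  -- first reduction: u := DC - rp * εC satisfies u' = rm * u
  set u : ℝ → ℂ := fun t => DC t - rp * εC t with hudef
  have huc : Continuous u := hDCc.sub (continuous_const.mul hεCc)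
  have hud : ∀ t : ℝ, 0 ≤ t → HasDerivAt u (rm * u t) t := by
    intro t ht
    have h3 := (hDCd t ht).sub ((hεCd t ht).const_mul rp)
    refine h3.congr_deriv (Eq.symm ?_)
    have h4 : rp + rm = -(ξ:ℂ) := hsum
    have h5 : rp * rm = (κ:ℂ) := hprod
    have hs2' : s^2 = (ξ:ℂ)^2 - 4*(κ:ℂ) := by rw [hs2, hΔ]; push_cast; ring
    simp only [hudef]
    linear_combination (DC t) * h4 - (εC t) * h5
  -- exp derivative helper
  have hexp : ∀ (c : ℂ) (t : ℝ), HasDerivAt (fun x : ℝ => Complex.exp (c * x))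
      (c * Complex.exp (c * t)) t := by
    intro c t
    have h1 : HasDerivAt (fun x : ℝ => ((x : ℂ))) 1 t := (hasDerivAt_id t).ofReal_comp
    have h2 := ((h1.const_mul c).cexp)
    simpa [mul_comm] using h2
  -- constancy trick
  have hconst : ∀ (f : ℝ → ℂ), ContinuousOn f (Set.Ici 0) →
      (∀ t : ℝ, 0 ≤ t → HasDerivAt f 0 t) → ∀ t : ℝ, 0 ≤ t → f t = f 0 := by
    intro f hfc hfd t ht
    have := constant_of_has_deriv_right_zero (f := f) (a := 0) (b := t)
      (hfc.mono (Set.Icc_subset_Ici_self))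
      (fun x hx => ((hfd x hx.1).hasDerivWithinAt))
      t (Set.mem_Icc.mpr ⟨ht, le_refl t⟩)
    exact this
  -- solve for u
  have hu_eq : ∀ t : ℝ, 0 ≤ t → u t = u 0 * Complex.exp (rm * t) := by
    intro t ht
    have hg : ∀ x : ℝ, 0 ≤ x → HasDerivAt (fun y => u y * Complex.exp (-rm * y)) 0 x := by
      intro x hx
      have := (hud x hx).mul (hexp (-rm) x)
      refine this.congr_deriv (Eq.symm ?_)
      ring
    have hgc : ContinuousOn (fun y => u y * Complex.exp (-rm * y)) (Set.Ici 0) :=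
      (huc.mul ((Complex.continuous_exp.comp
        (continuous_const.mul Complex.continuous_ofReal)))).continuousOn
    have h0 := hconst _ hgc hg t ht
    simp only [Complex.ofReal_zero, mul_zero, Complex.exp_zero, mul_one] at h0
    have hmul : Complex.exp (-rm * t) * Complex.exp (rm * t) = 1 := by
      rw [← Complex.exp_add, neg_mul, neg_add_cancel, Complex.exp_zero]
    calc u t = u t * (Complex.exp (-rm * t) * Complex.exp (rm * t)) := by rw [hmul, mul_one]
      _ = (u t * Complex.exp (-rm * t)) * Complex.exp (rm * t) := by ring
      _ = u 0 * Complex.exp (rm * t) := by rw [h0]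
  -- second reduction: εC t * exp(-rp t) = εC 0 + u 0 * K t
  set K : ℝ → ℂ := fun t => ∫ x in (0:ℝ)..t, Complex.exp ((rm - rp) * x) with hKdef
  have hKcint : Continuous fun x : ℝ => Complex.exp ((rm - rp) * x) :=
    Complex.continuous_exp.comp (continuous_const.mul Complex.continuous_ofReal)
  have hK : ∀ t : ℝ, HasDerivAt K (Complex.exp ((rm - rp) * t)) t := fun t =>
    intervalIntegral.integral_hasDerivAt_right (hKcint.intervalIntegrable _ _)
      (hKcint.stronglyMeasurableAtFilter _ _) hKcint.continuousAt
  have hKc : Continuous K :=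
    intervalIntegral.continuous_primitive (fun a b => hKcint.intervalIntegrable a b) 0
  have hsol : ∀ t : ℝ, 0 ≤ t → εC t = (εC 0 + u 0 * K t) * Complex.exp (rp * t) := by
    intro t ht
    set h : ℝ → ℂ := fun y => εC y * Complex.exp (-rp * y) - u 0 * K y with hhdef
    have hhc : ContinuousOn h (Set.Ici 0) :=
      ((hεCc.mul (Complex.continuous_exp.comp
        (continuous_const.mul Complex.continuous_ofReal))).sub
        (continuous_const.mul hKc)).continuousOn
    have hhd : ∀ x : ℝ, 0 ≤ x → HasDerivAt h 0 x := by
      intro x hx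
      have hd := ((hεCd x hx).mul (hexp (-rp) x)).sub ((hK x).const_mul (u 0))
      refine hd.congr_deriv (Eq.symm ?_)
      have hux := hu_eq x hx
      have he1 : Complex.exp (rm * x) * Complex.exp (-rp * x) = Complex.exp ((rm - rp) * x) := by
        rw [← Complex.exp_add]; ring_nf
      have : DC x * Complex.exp (-rp * x) + εC x * (-rp * Complex.exp (-rp * x))
          - u 0 * Complex.exp ((rm - rp) * x)
          = u x * Complex.exp (-rp * x) - u 0 * Complex.exp ((rm - rp) * x) := by
        simp only [hudef]; ring
      rw [eq_comm, this, hux, mul_assoc, he1]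
      ring
    have h0 := hconst h hhc hhd t ht
    have hK0 : K 0 = 0 := by simp [hKdef]
    simp only [hhdef, hK0, mul_zero, sub_zero, Complex.ofReal_zero, Complex.exp_zero,
      mul_one, neg_mul, neg_zero] at h0
    -- h0 : εC t * exp(-rp t) - u 0 * K t = εC 0
    have hmul : Complex.exp (-(rp * t)) * Complex.exp (rp * t) = 1 := by
      rw [← Complex.exp_add, neg_add_cancel, Complex.exp_zero]
    calc εC t = εC t * (Complex.exp (-(rp * t)) * Complex.exp (rp * t)) := by rw [hmul, mul_one]
      _ = (εC t * Complex.exp (-(rp * t)) - u 0 * K t + u 0 * K t) * Complex.exp (rp * t) := by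
          ring
      _ = (εC 0 + u 0 * K t) * Complex.exp (rp * t) := by rw [h0]
  -- norm bound
  have hbound : ∀ t : ℝ, 0 ≤ t →
      |ε t| ≤ (‖εC 0‖) * Real.exp (rp.re * t)
        + (‖u 0‖) * (t * Real.exp (rp.re * t)) := by
    intro t ht
    have habs : |ε t| = ‖εC t‖ := by
      simp [hεCdef, Complex.norm_real]
    have hexpabs : ‖Complex.exp (rp * t)‖ = Real.exp (rp.re * t) := by
      rw [Complex.norm_exp]
      congr 1
      simp [Complex.mul_re]
    have hKbound : ‖K t‖ ≤ t := by
      have := intervalIntegral.norm_integral_le_of_norm_le_const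
        (C := 1) (f := fun x : ℝ => Complex.exp ((rm - rp) * x)) (a := (0:ℝ)) (b := t) ?_
      · simpa [abs_of_nonneg ht] using this
      · intro x hx
        rw [Set.uIoc_of_le ht] at hx
        have hx' : 0 ≤ x := hx.1.le
        rw [Complex.norm_exp]
        have hre : ((rm - rp) * (x:ℂ)).re = (rm.re - rp.re) * x := by
          simp [Complex.mul_re, Complex.sub_re]
        rw [hre]
        calc Real.exp ((rm.re - rp.re) * x) ≤ Real.exp 0 := by
              apply Real.exp_le_exp.mpr; nlinarith
          _ = 1 := Real.exp_zero
    calc |ε t| = ‖εC t‖ := habs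
      _ = ‖(εC 0 + u 0 * K t) * Complex.exp (rp * t)‖ := by rw [hsol t ht]
      _ = ‖εC 0 + u 0 * K t‖ * Real.exp (rp.re * t) := by
          rw [norm_mul, hexpabs]
      _ ≤ (‖εC 0‖ + ‖u 0‖ * t) * Real.exp (rp.re * t) := by
          apply mul_le_mul_of_nonneg_right _ (Real.exp_nonneg _)
          calc ‖εC 0 + u 0 * K t‖
              ≤ ‖εC 0‖ + ‖u 0 * K t‖ := norm_add_le _ _
            _ = ‖εC 0‖ + ‖u 0‖ * ‖K t‖ := by rw [norm_mul]
            _ ≤ ‖εC 0‖ + ‖u 0‖ * t := by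
                have := mul_le_mul_of_nonneg_left hKbound (norm_nonneg (u 0))
                linarith
      _ = ‖εC 0‖ * Real.exp (rp.re * t)
            + ‖u 0‖ * (t * Real.exp (rp.re * t)) := by ring
  -- limits of the bounding functions
  have hlin : Tendsto (fun t : ℝ => -rp.re * t) atTop atTop := by
    apply Tendsto.const_mul_atTop (by linarith : (0:ℝ) < -rp.re) tendsto_id
  have hexp0 : Tendsto (fun t : ℝ => Real.exp (rp.re * t)) atTop (nhds 0) := by
    have := Real.tendsto_exp_atBot.comp (tendsto_neg_atTop_atBot.comp hlin)
    convert this using 2 with t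
    simp only [Function.comp]
    congr 1
    ring
  have htexp0 : Tendsto (fun t : ℝ => t * Real.exp (rp.re * t)) atTop (nhds 0) := by
    have h1 := (Real.tendsto_pow_mul_exp_neg_atTop_nhds_zero 1).comp hlin
    have h2 := h1.const_mul (-1/rp.re)
    rw [mul_zero] at h2
    convert h2 using 2 with t
    simp only [Function.comp, pow_one]
    have : -(-rp.re * t) = rp.re * t := by ring
    rw [this]
    have hane : rp.re ≠ 0 := ne_of_lt ha
    field_simp
  have hB : Tendsto (fun t : ℝ => ‖εC 0‖ * Real.exp (rp.re * t)
      + ‖u 0‖ * (t * Real.exp (rp.re * t))) atTop (nhds 0) := by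
    have := (hexp0.const_mul (‖εC 0‖)).add (htexp0.const_mul (‖u 0‖))
    simpa using this
  -- squeeze
  apply squeeze_zero_norm' _ hB
  filter_upwards [eventually_ge_atTop (0:ℝ)] with t ht
  simpa [Real.norm_eq_abs] using hbound t ht
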